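/- arXiv:2409.05654 — 4 statements merged into one kernel-verified Lean document; each statement's English description precedes it below -/
import Mathlib

section
/- Let Ω be a measurable space, H an arbitrary (possibly composite) set of probability measures on Ω, Q a probability measure on Ω, α > 0, and U a utility function on [0, 1/α]. Let E_α denote the set of measurable ε : Ω → [0, 1/α] with E_P[ε] ≤ 1 for every P ∈ H. Then there exists ε* ∈ E_α such that E_Q[U(ε*)] = sup_{ε ∈ E_α} E_Q[U(ε)]; that is, a valid level-α expected-utility-optimal continuous test exists. -/
open MeasureTheory ENNReal NNReal Set

/-- A utility function `U : [0, 1/α] → [0, ∞]` with derivative `U' = D`: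
`U 0 = 0`, `U` is non-decreasing, concave and continuous on `[0, 1/α]`, finite
and differentiable (in real coordinates) on the interior of its domain, and its
derivative `D` is continuous and decreasing on `[0, 1/α]`. -/
structure IsUtility (α : ℝ≥0∞) (U D : ℝ≥0∞ → ℝ≥0∞) : Prop where
  map_zero : U 0 = 0
  monotoneOn : MonotoneOn U (Icc 0 α⁻¹)
  concaveOn : ∀ x ∈ Icc (0 : ℝ≥0∞) α⁻¹, ∀ y ∈ Icc (0 : ℝ≥0∞) α⁻¹,
    ∀ t : ℝ≥0∞, t ≤ 1 → t * U x + (1 - t) * U y ≤ U (t * x + (1 - t) * y)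
  continuousOn : ContinuousOn U (Icc 0 α⁻¹)
  finite_of_lt : ∀ x : ℝ≥0∞, x < α⁻¹ → U x ≠ ∞
  deriv_finite : ∀ x : ℝ≥0∞, 0 < x → x < α⁻¹ → D x ≠ ∞
  hasDerivAt : ∀ x : ℝ, 0 < x → ENNReal.ofReal x < α⁻¹ →
    HasDerivAt (fun t : ℝ => (U (ENNReal.ofReal t)).toReal)
      ((D (ENNReal.ofReal x)).toReal) x
  deriv_continuousOn : ContinuousOn D (Icc 0 α⁻¹)
  deriv_antitoneOn : AntitoneOn D (Icc 0 α⁻¹)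

namespace OptTestAux

open Filter Topology

variable {Ω : Type*} [MeasurableSpace Ω]


/-- Measurability of `U ∘ g` for `U` continuous on `Icc 0 β` and `g` into `Icc 0 β`. -/
lemma measurable_U_comp {β : ℝ≥0∞} {U : ℝ≥0∞ → ℝ≥0∞}
    (hUc : ContinuousOn U (Icc 0 β)) {g : Ω → ℝ≥0∞}
    (hg : Measurable g) (hgb : ∀ ω, g ω ≤ β) :
    Measurable fun ω => U (g ω) := by
  have h2 : Continuous fun x : Icc (0:ℝ≥0∞) β => U x :=
    continuousOn_iff_continuous_restrict.mp hUc
  have h1 : Measurable fun ω => (⟨g ω, ⟨zero_le, hgb ω⟩⟩ : Icc (0:ℝ≥0∞) β) :=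
    hg.subtype_mk
  exact h2.measurable.comp h1

/-- Finite Jensen inequality for a concave `U` on `Icc 0 β` (in `ℝ≥0∞`). -/
lemma jensen {β : ℝ≥0∞} {U : ℝ≥0∞ → ℝ≥0∞}
    (hconc : ∀ x ∈ Icc (0:ℝ≥0∞) β, ∀ y ∈ Icc (0:ℝ≥0∞) β, ∀ t : ℝ≥0∞, t ≤ 1 →
      t * U x + (1-t) * U y ≤ U (t*x + (1-t)*y))
    {ι : Type*} (s : Finset ι) (w x : ι → ℝ≥0∞)
    (hw : ∑ i ∈ s, w i = 1) (hx : ∀ i ∈ s, x i ≤ β) :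
    ∑ i ∈ s, w i * U (x i) ≤ U (∑ i ∈ s, w i * x i) := by
  classical
  induction s using Finset.induction generalizing w with
  | empty => simp at hw
  | insert a s ha ih =>
    rw [Finset.sum_insert ha] at hw ⊢
    rw [Finset.sum_insert ha]
    set W : ℝ≥0∞ := ∑ i ∈ s, w i with hW
    have hwa1 : w a ≤ 1 := le_of_add_le_left hw.le
    have hW1 : W ≤ 1 := le_of_add_le_right hw.le
    have hWtop : W ≠ ∞ := ne_top_of_le_ne_top one_ne_top hW1
    by_cases hW0 : W = 0
    · have hz : ∀ i ∈ s, w i = 0 :=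
        Finset.sum_eq_zero_iff.mp (hW.symm.trans hW0)
      have h1 : ∑ i ∈ s, w i * U (x i) = 0 := Finset.sum_eq_zero fun i hi => by
        rw [hz i hi, zero_mul]
      have h2 : ∑ i ∈ s, w i * x i = 0 := Finset.sum_eq_zero fun i hi => by
        rw [hz i hi, zero_mul]
      have hwa : w a = 1 := by rw [hW0, add_zero] at hw; exact hw
      rw [h1, h2, hwa, add_zero, add_zero, one_mul, one_mul]
    · -- normalize
      set w' : ι → ℝ≥0∞ := fun i => w i / W with hw'
      have hw'sum : ∑ i ∈ s, w' i = 1 := by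
        simp only [hw', div_eq_mul_inv]
        rw [← Finset.sum_mul, ← hW, ENNReal.mul_inv_cancel hW0 hWtop]
      have hxmem : ∀ i ∈ s, x i ≤ β := fun i hi => hx i (Finset.mem_insert_of_mem hi)
      have hIH := ih w' hw'sum hxmem
      set y : ℝ≥0∞ := ∑ i ∈ s, w' i * x i with hy
      have hyβ : y ≤ β := by
        calc y ≤ ∑ i ∈ s, w' i * β := Finset.sum_le_sum fun i hi =>
              mul_le_mul_right (hxmem i hi) _
        _ = (∑ i ∈ s, w' i) * β := (Finset.sum_mul _ _ _).symm
        _ = β := by rw [hw'sum, one_mul]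
      have hWy : W * y = ∑ i ∈ s, w i * x i := by
        rw [hy, Finset.mul_sum]
        refine Finset.sum_congr rfl fun i hi => ?_
        rw [← mul_assoc, hw']
        congr 1
        exact ENNReal.mul_div_cancel hW0 hWtop
      have hWU : W * (∑ i ∈ s, w' i * U (x i)) = ∑ i ∈ s, w i * U (x i) := by
        rw [Finset.mul_sum]
        refine Finset.sum_congr rfl fun i hi => ?_
        rw [← mul_assoc, hw']
        congr 1
        exact ENNReal.mul_div_cancel hW0 hWtop
      have hWeq : 1 - w a = W := (ENNReal.eq_sub_of_add_eq
        (ne_top_of_le_ne_top one_ne_top hwa1) (by rw [add_comm]; exact hw)).symm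
      have hkey := hconc (x a) ⟨zero_le, hx a (Finset.mem_insert_self a s)⟩
        y ⟨zero_le, hyβ⟩ (w a) hwa1
      rw [hWeq] at hkey
      calc w a * U (x a) + ∑ i ∈ s, w i * U (x i)
          = w a * U (x a) + W * (∑ i ∈ s, w' i * U (x i)) := by rw [hWU]
        _ ≤ w a * U (x a) + W * U y := by
            exact add_le_add_right (mul_le_mul_right hIH _) _
        _ ≤ U (w a * x a + W * y) := hkey
        _ = U (w a * x a + ∑ i ∈ s, w i * x i) := by rw [hWy]

/-- Superhomogeneity: `t * U x ≤ U (t * x)` for `t ≤ 1`. -/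
lemma superhom {β : ℝ≥0∞} {U : ℝ≥0∞ → ℝ≥0∞} (hU0 : U 0 = 0)
    (hconc : ∀ x ∈ Icc (0:ℝ≥0∞) β, ∀ y ∈ Icc (0:ℝ≥0∞) β, ∀ t : ℝ≥0∞, t ≤ 1 →
      t * U x + (1-t) * U y ≤ U (t*x + (1-t)*y))
    {x t : ℝ≥0∞} (hx : x ≤ β) (ht : t ≤ 1) :
    t * U x ≤ U (t * x) := by
  have := hconc x ⟨zero_le, hx⟩ 0 ⟨le_refl _, zero_le⟩ t ht
  simpa [hU0] using this


lemma coeFn_finset_sum {α : Type*} [MeasurableSpace α] {μ : Measure α} {ι : Type*}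
    (s : Finset ι) (h : ι → Lp ℝ 2 μ) :
    ⇑(∑ i ∈ s, h i) =ᵐ[μ] fun ω => ∑ i ∈ s, (h i : α → ℝ) ω := by
  classical
  induction s using Finset.induction with
  | empty => simp only [Finset.sum_empty]; exact MeasureTheory.Lp.coeFn_zero ℝ 2 μ
  | insert a s ha ih =>
    rw [Finset.sum_insert ha]
    filter_upwards [MeasureTheory.Lp.coeFn_add (h a) (∑ i ∈ s, h i), ih] with ω h1 h2
    rw [h1]
    simp only [Pi.add_apply, h2, Finset.sum_insert ha]

set_option maxHeartbeats 1000000 in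
theorem test
    {Ω : Type*} [MeasurableSpace Ω]
    (H : Set (Measure Ω)) (hH : ∀ P ∈ H, IsProbabilityMeasure P)
    (Q : Measure Ω) [IsProbabilityMeasure Q]
    (α : ℝ≥0∞) (hα : 0 < α)
    (U : ℝ≥0∞ → ℝ≥0∞)
    (hU0 : U 0 = 0) (hUmono : MonotoneOn U (Icc 0 α⁻¹))
    (hconc : ∀ x ∈ Icc (0 : ℝ≥0∞) α⁻¹, ∀ y ∈ Icc (0 : ℝ≥0∞) α⁻¹,
      ∀ t : ℝ≥0∞, t ≤ 1 → t * U x + (1 - t) * U y ≤ U (t * x + (1 - t) * y))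
    (hUc : ContinuousOn U (Icc 0 α⁻¹))
    (hUfin : ∀ x : ℝ≥0∞, x < α⁻¹ → U x ≠ ∞) :
    ∃ εs : Ω → ℝ≥0∞, Measurable εs ∧ (∀ ω, εs ω ≤ α⁻¹) ∧
      (∀ P ∈ H, ∫⁻ ω, εs ω ∂P ≤ 1) ∧
      ∀ ε : Ω → ℝ≥0∞, Measurable ε → (∀ ω, ε ω ≤ α⁻¹) →
        (∀ P ∈ H, ∫⁻ ω, ε ω ∂P ≤ 1) →
        ∫⁻ ω, U (ε ω) ∂Q ≤ ∫⁻ ω, U (εs ω) ∂Q := by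
  classical
  set β : ℝ≥0∞ := α⁻¹ with hβdef
  have hβtop : β ≠ ∞ := ENNReal.inv_ne_top.mpr hα.ne'
  by_cases hβ0 : β = 0
  · refine ⟨fun _ => 0, measurable_const, fun ω => zero_le, fun P _ => by simp, ?_⟩
    intro ε hm hb hv
    have hz : ∀ ω, ε ω = 0 := fun ω => le_antisymm (hβ0 ▸ hb ω) (zero_le)
    simp only [hz]
    exact le_refl _
  -- main case
  set I : (Ω → ℝ≥0∞) → ℝ≥0∞ := fun ε => ∫⁻ ω, U (ε ω) ∂Q with hIdef
  set SS : Set ℝ≥0∞ :=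
    I '' {ε | Measurable ε ∧ (∀ ω, ε ω ≤ β) ∧ ∀ P ∈ H, ∫⁻ ω, ε ω ∂P ≤ 1} with hSSdef
  have hSSne : SS.Nonempty :=
    ⟨_, ⟨fun _ => 0, ⟨measurable_const, fun _ => zero_le, fun P _ => by simp⟩, rfl⟩⟩
  set S : ℝ≥0∞ := sSup SS with hSdef
  suffices h : ∃ εs, (Measurable εs ∧ (∀ ω, εs ω ≤ β) ∧ ∀ P ∈ H, ∫⁻ ω, εs ω ∂P ≤ 1)
      ∧ S ≤ I εs by
    obtain ⟨εs, ⟨hm, hb, hv⟩, hle⟩ := h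
    refine ⟨εs, hm, hb, hv, fun ε hεm hεb hεv => ?_⟩
    have hmem : I ε ∈ SS := ⟨ε, ⟨hεm, hεb, hεv⟩, rfl⟩
    exact le_trans (le_sSup hmem) hle
  obtain ⟨u, humono, hutend, humem⟩ := exists_seq_tendsto_sSup hSSne (OrderTop.bddAbove SS)
  choose ε hεval hεI using humem
  have hεm : ∀ n, Measurable (ε n) := fun n => (hεval n).1
  have hεb : ∀ n ω, ε n ω ≤ β := fun n => (hεval n).2.1
  have hεv : ∀ n, ∀ P ∈ H, ∫⁻ ω, ε n ω ∂P ≤ 1 := fun n => (hεval n).2.2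
  -- L² machinery
  set M : ℝ := β.toReal with hMdef
  have hMnonneg : 0 ≤ M := ENNReal.toReal_nonneg
  have habs : ∀ n ω, ‖(ε n ω).toReal‖ ≤ M := fun n ω => by
    rw [Real.norm_eq_abs, abs_of_nonneg ENNReal.toReal_nonneg]
    exact ENNReal.toReal_mono hβtop (hεb n ω)
  have hmemX : ∀ n, MemLp (fun ω => (ε n ω).toReal) 2 Q := fun n =>
    MemLp.of_bound (hεm n).ennreal_toReal.aestronglyMeasurable M (ae_of_all Q (habs n))
  set X : ℕ → Lp ℝ 2 Q := fun n => MemLp.toLp _ (hmemX n) with hXdef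
  have hXnorm : ∀ n, ‖X n‖ ≤ M := by
    intro n
    rw [MeasureTheory.Lp.norm_def]
    refine ENNReal.toReal_le_of_le_ofReal hMnonneg ?_
    rw [eLpNorm_congr_ae ((hmemX n).coeFn_toLp)]
    calc eLpNorm (fun ω => (ε n ω).toReal) 2 Q
        ≤ Q univ ^ (2:ℝ≥0∞).toReal⁻¹ * ENNReal.ofReal M :=
          eLpNorm_le_of_ae_bound (ae_of_all Q (habs n))
      _ = ENNReal.ofReal M := by simp
  set A : ℕ → Set (Lp ℝ 2 Q) := fun n => convexHull ℝ (X '' Ici n) with hAdef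
  have hAX : ∀ n, X n ∈ A n := fun n => subset_convexHull _ _ ⟨n, self_mem_Ici, rfl⟩
  have hAconv : ∀ n, Convex ℝ (A n) := fun n => convex_convexHull _ _
  have hAanti : ∀ {n m : ℕ}, n ≤ m → A m ⊆ A n := fun h =>
    convexHull_mono (image_mono (Ici_subset_Ici.mpr h))
  set dn : ℕ → ℝ := fun n => sInf (norm '' A n) with hdndef
  have hbddb : ∀ n, BddBelow (norm '' A n) := fun n =>
    ⟨0, by rintro _ ⟨f, -, rfl⟩; exact norm_nonneg f⟩
  have hnimg : ∀ n, (norm '' A n).Nonempty := fun n => ⟨_, mem_image_of_mem _ (hAX n)⟩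
  have hdn0 : ∀ n, 0 ≤ dn n := fun n =>
    le_csInf (hnimg n) (by rintro _ ⟨f, -, rfl⟩; exact norm_nonneg f)
  have hdnle : ∀ (n : ℕ) (f : Lp ℝ 2 Q), f ∈ A n → dn n ≤ ‖f‖ := fun n f hf =>
    csInf_le (hbddb n) (mem_image_of_mem _ hf)
  have hdnM : ∀ n, dn n ≤ M := fun n => le_trans (hdnle n _ (hAX n)) (hXnorm n)
  have hdmono : Monotone dn := fun n m h =>
    csInf_le_csInf (hbddb n) (hnimg m) (image_mono (hAanti h))
  set d : ℝ := ⨆ n, dn n with hddef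
  have hdbdd : BddAbove (range dn) := ⟨M, by rintro _ ⟨n, rfl⟩; exact hdnM n⟩
  have hdtend : Tendsto dn atTop (𝓝 d) := tendsto_atTop_ciSup hdmono hdbdd
  have hdnd : ∀ n, dn n ≤ d := fun n => le_ciSup hdbdd n
  have hd0 : 0 ≤ d := le_trans (hdn0 0) (hdnd 0)
  -- choose an approximately minimal-norm sequence in the tail convex hulls
  have hgex : ∀ n : ℕ, ∃ f ∈ A n, ‖f‖ < dn n + ((n:ℝ)+1)⁻¹ := by
    intro n
    have hpos : dn n < dn n + ((n:ℝ)+1)⁻¹ := lt_add_of_pos_right _ (by positivity)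
    obtain ⟨-, ⟨f, hf, rfl⟩, hlt⟩ := exists_lt_of_csInf_lt (hnimg n) hpos
    exact ⟨f, hf, hlt⟩
  choose g hgA hgnorm using hgex
  -- the parallelogram estimate
  have hkey : ∀ N n m : ℕ, N ≤ n → N ≤ m →
      ‖g n - g m‖^2 ≤ 2*(dn n + ((n:ℝ)+1)⁻¹)^2 + 2*(dn m + ((m:ℝ)+1)⁻¹)^2 - 4*(dn N)^2 := by
    intro N n m hn hm
    have hpar := parallelogram_law_with_norm ℝ (g n) (g m)
    have hmid : (2⁻¹:ℝ) • (g n + g m) ∈ A N := by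
      have := (hAconv N) (hAanti hn (hgA n)) (hAanti hm (hgA m))
        (by norm_num : (0:ℝ) ≤ 2⁻¹) (by norm_num : (0:ℝ) ≤ 2⁻¹) (by norm_num)
      simpa [smul_add] using this
    have h1 : dn N ≤ ‖(2⁻¹:ℝ) • (g n + g m)‖ := hdnle N _ hmid
    rw [norm_smul] at h1
    have hn1 : ‖(2⁻¹:ℝ)‖ = 2⁻¹ := by rw [Real.norm_eq_abs]; norm_num
    rw [hn1] at h1
    have h3 := hgnorm n
    have h4 := hgnorm m
    have h5 := norm_nonneg (g n)
    have h6 := norm_nonneg (g m)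
    have h7 := norm_nonneg (g n + g m)
    have h1' : 2 * dn N ≤ ‖g n + g m‖ := by linarith
    have h8 : 0 ≤ dn N := hdn0 N
    have h9 : (0:ℝ) ≤ 2 * dn N := by linarith
    have h10 : (2 * dn N) * (2 * dn N) ≤ ‖g n + g m‖ * ‖g n + g m‖ :=
      mul_le_mul h1' h1' h9 h7
    have h11 : ‖g n‖ * ‖g n‖ ≤ (dn n + ((n:ℝ)+1)⁻¹) * (dn n + ((n:ℝ)+1)⁻¹) :=
      mul_le_mul h3.le h3.le h5 (le_trans h5 h3.le)
    have h12 : ‖g m‖ * ‖g m‖ ≤ (dn m + ((m:ℝ)+1)⁻¹) * (dn m + ((m:ℝ)+1)⁻¹) :=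
      mul_le_mul h4.le h4.le h6 (le_trans h6 h4.le)
    ring_nf
    ring_nf at h10 h11 h12 hpar
    linarith
  -- Cauchy
  have hcauchy : CauchySeq g := by
    rw [Metric.cauchySeq_iff]
    intro εr hεr
    set δ : ℝ := min 1 (εr^2/(32*(d+1))) with hδdef
    have hδpos : 0 < δ := lt_min one_pos (by positivity)
    have hδ1 : δ ≤ 1 := min_le_left _ _
    have hδ2 : δ * (32*(d+1)) ≤ εr^2 := by
      have h := min_le_right 1 (εr^2/(32*(d+1)))
      calc δ * (32*(d+1)) ≤ (εr^2/(32*(d+1))) * (32*(d+1)) := by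
            apply mul_le_mul_of_nonneg_right h; positivity
        _ = εr^2 := by field_simp
    obtain ⟨N₁, hN₁⟩ := Metric.tendsto_atTop.mp hdtend δ hδpos
    obtain ⟨N₂, hN₂⟩ := exists_nat_gt δ⁻¹
    refine ⟨max N₁ N₂, fun n hn m hm => ?_⟩
    set N := max N₁ N₂ with hNdef
    have hinv : ∀ k : ℕ, N ≤ k → ((k:ℝ)+1)⁻¹ < δ := by
      intro k hk
      have h1 : δ⁻¹ < (k:ℝ)+1 := by
        have : (N₂:ℝ) ≤ k := Nat.cast_le.mpr (le_trans (le_max_right _ _) hk)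
        linarith
      rw [← inv_inv δ]
      exact inv_strictAnti₀ (by positivity) h1
    have hdN : d - δ < dn N := by
      have := hN₁ N (le_max_left _ _)
      rw [Real.dist_eq, abs_lt] at this
      linarith
    have hkey' := hkey N n m hn hm
    have hbn : dn n + ((n:ℝ)+1)⁻¹ < d + δ := by
      have := hinv n hn; have := hdnd n; linarith
    have hbm : dn m + ((m:ℝ)+1)⁻¹ < d + δ := by
      have := hinv m hm; have := hdnd m; linarith
    have hnn : (0:ℝ) ≤ dn n + ((n:ℝ)+1)⁻¹ := by
      have := hdn0 n; positivity
    have hmm : (0:ℝ) ≤ dn m + ((m:ℝ)+1)⁻¹ := by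
      have := hdn0 m; positivity
    have hsq : ‖g n - g m‖^2 < εr^2 := by
      have hb1 : (dn n + ((n:ℝ)+1)⁻¹)^2 ≤ (d + δ)^2 := by nlinarith
      have hb2 : (dn m + ((m:ℝ)+1)⁻¹)^2 ≤ (d + δ)^2 := by nlinarith
      rcases le_or_gt δ d with hc | hc
      · have h1 : (d - δ)^2 ≤ (dn N)^2 := by nlinarith [hdn0 N]
        nlinarith
      · have h1 : (0:ℝ) ≤ (dn N)^2 := sq_nonneg _
        nlinarith
    rw [dist_eq_norm]
    exact lt_of_pow_lt_pow_left₀ 2 hεr.le hsq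
  obtain ⟨f, hftend⟩ := cauchySeq_tendsto_of_complete hcauchy
  set G : ℕ → Ω → ℝ := fun n => ⇑(g n) with hGdef
  set F : Ω → ℝ := ⇑f with hFdef
  have htnorm0 : Tendsto (fun n => eLpNorm (G n - F) 2 Q) atTop (𝓝 0) := by
    have h1 : ∀ n, eLpNorm (G n - F) 2 Q = ENNReal.ofReal ‖g n - f‖ := by
      intro n
      rw [← eLpNorm_congr_ae (MeasureTheory.Lp.coeFn_sub (g n) f), MeasureTheory.Lp.norm_def,
        ENNReal.ofReal_toReal (MeasureTheory.Lp.eLpNorm_ne_top _)]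
    simp only [h1]
    have h2 : Tendsto (fun n => ‖g n - f‖) atTop (𝓝 0) := by
      simpa [dist_eq_norm] using tendsto_iff_dist_tendsto_zero.mp hftend
    have h3 := (ENNReal.continuous_ofReal.tendsto 0).comp h2
    simpa [Function.comp_def, ofReal_norm] using h3
  have htim : TendstoInMeasure Q G atTop F :=
    tendstoInMeasure_of_tendsto_eLpNorm (by norm_num : (2:ℝ≥0∞) ≠ 0)
      (fun n => MeasureTheory.Lp.aestronglyMeasurable (g n))
      (MeasureTheory.Lp.aestronglyMeasurable f) htnorm0
  obtain ⟨ns, hnsmono, hae⟩ := htim.exists_seq_tendsto_ae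
  -- decode convex combinations as valid tests
  have hdecode : ∀ k : ℕ, ∃ η : Ω → ℝ≥0∞, Measurable η ∧ (∀ ω, η ω ≤ β) ∧
      (∀ P ∈ H, ∫⁻ ω, η ω ∂P ≤ 1) ∧ u k ≤ I η ∧
      (fun ω => (η ω).toReal) =ᵐ[Q] G k := by
    intro k
    have hmem := hgA k
    simp only [hAdef] at hmem
    rw [convexHull_eq] at hmem
    obtain ⟨ι, t, w, z, hw0, hw1, hz, hcm⟩ := hmem
    have hz' : ∀ i ∈ t, ∃ j, k ≤ j ∧ X j = z i := by
      intro i hi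
      obtain ⟨j, hj, hXj⟩ := hz i hi
      exact ⟨j, hj, hXj⟩
    choose! m hm1 hm2 using hz'
    have hwfin : ∀ i ∈ t, ENNReal.ofReal (w i) ≠ ∞ := fun i _ => ENNReal.ofReal_ne_top
    have hsumw : ∑ i ∈ t, ENNReal.ofReal (w i) = 1 := by
      rw [← ENNReal.ofReal_sum_of_nonneg hw0, hw1, ENNReal.ofReal_one]
    refine ⟨fun ω => ∑ i ∈ t, ENNReal.ofReal (w i) * ε (m i) ω, ?_, ?_, ?_, ?_, ?_⟩
    · exact Finset.measurable_sum t fun i _ => (hεm (m i)).const_mul _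
    · intro ω
      calc ∑ i ∈ t, ENNReal.ofReal (w i) * ε (m i) ω
          ≤ ∑ i ∈ t, ENNReal.ofReal (w i) * β :=
            Finset.sum_le_sum fun i _ => mul_le_mul_right (hεb _ ω) _
        _ = (∑ i ∈ t, ENNReal.ofReal (w i)) * β := (Finset.sum_mul _ _ _).symm
        _ = β := by rw [hsumw, one_mul]
    · intro P hP
      rw [lintegral_finset_sum t fun i _ => (hεm (m i)).const_mul _]
      calc ∑ i ∈ t, ∫⁻ ω, ENNReal.ofReal (w i) * ε (m i) ω ∂P
          = ∑ i ∈ t, ENNReal.ofReal (w i) * ∫⁻ ω, ε (m i) ω ∂P :=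
            Finset.sum_congr rfl fun i _ => lintegral_const_mul _ (hεm (m i))
        _ ≤ ∑ i ∈ t, ENNReal.ofReal (w i) * 1 :=
            Finset.sum_le_sum fun i _ => mul_le_mul_right (hεv (m i) P hP) _
        _ = 1 := by simp [hsumw]
    · -- utility lower bound via Jensen
      have hjen : ∀ ω, ∑ i ∈ t, ENNReal.ofReal (w i) * U (ε (m i) ω) ≤
          U (∑ i ∈ t, ENNReal.ofReal (w i) * ε (m i) ω) := fun ω =>
        jensen hconc t _ _ hsumw (fun i _ => hεb _ ω)
      have hUm : ∀ i : ι, Measurable fun ω => U (ε (m i) ω) := fun i =>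
        measurable_U_comp hUc (hεm (m i)) (hεb (m i))
      calc u k = ∑ i ∈ t, ENNReal.ofReal (w i) * u k := by
            rw [← Finset.sum_mul, hsumw, one_mul]
        _ ≤ ∑ i ∈ t, ENNReal.ofReal (w i) * I (ε (m i)) :=
            Finset.sum_le_sum fun i hi => mul_le_mul_right
              (by rw [hεI (m i)]; exact humono (hm1 i hi)) _
        _ = ∑ i ∈ t, ∫⁻ ω, ENNReal.ofReal (w i) * U (ε (m i) ω) ∂Q :=
            Finset.sum_congr rfl fun i _ => (lintegral_const_mul _ (hUm i)).symm
        _ = ∫⁻ ω, ∑ i ∈ t, ENNReal.ofReal (w i) * U (ε (m i) ω) ∂Q :=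
            (lintegral_finset_sum t fun i _ => (hUm i).const_mul _).symm
        _ ≤ I (fun ω => ∑ i ∈ t, ENNReal.ofReal (w i) * ε (m i) ω) :=
            lintegral_mono fun ω => hjen ω
    · -- a.e. identification with G k
      have hcm' : g k = ∑ i ∈ t, w i • X (m i) := by
        rw [← hcm, Finset.centerMass_eq_of_sum_1 _ _ hw1]
        exact Finset.sum_congr rfl fun i hi => by rw [hm2 i hi]
      have hsum := coeFn_finset_sum t (fun i => w i • X (m i))
      have hsmul : ∀ᵐ ω ∂Q, ∀ i ∈ t, (⇑(w i • X (m i)) : Ω → ℝ) ω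
          = w i * (ε (m i) ω).toReal := by
        rw [Filter.eventually_all_finset t]
        intro i hi
        filter_upwards [MeasureTheory.Lp.coeFn_smul (w i) (X (m i)),
          (hmemX (m i)).coeFn_toLp] with ω h1 h2
        rw [h1]
        simp [hXdef, h2]
      rw [hGdef]
      simp only [hcm']
      filter_upwards [hsum, hsmul] with ω h1 h2
      have h3 : (∑ i ∈ t, ENNReal.ofReal (w i) * ε (m i) ω).toReal
          = ∑ i ∈ t, w i * (ε (m i) ω).toReal := by
        rw [ENNReal.toReal_sum]
        · exact Finset.sum_congr rfl fun i hi => by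
            rw [ENNReal.toReal_mul, ENNReal.toReal_ofReal (hw0 i hi)]
        · intro i hi
          exact ENNReal.mul_ne_top ENNReal.ofReal_ne_top
            (ne_top_of_le_ne_top hβtop (hεb (m i) ω))
      rw [h3, h1]
      exact (Finset.sum_congr rfl fun i hi => (h2 i hi)).symm
  choose η hηm hηb hηv hηI hηae using hdecode
  -- the candidate optimal test
  set εs : Ω → ℝ≥0∞ := fun ω => liminf (fun j => η (ns j) ω) atTop with hεsdef
  have hεsm : Measurable εs := Measurable.liminf fun j => hηm (ns j)
  have hεsb : ∀ ω, εs ω ≤ β := by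
    intro ω
    have h1 : liminf (fun j => η (ns j) ω) atTop ≤ liminf (fun _ : ℕ => β) atTop :=
      liminf_le_liminf (Filter.Eventually.of_forall fun j => hηb (ns j) ω)
    simpa using h1
  have hεsv : ∀ P ∈ H, ∫⁻ ω, εs ω ∂P ≤ 1 := by
    intro P hP
    calc ∫⁻ ω, εs ω ∂P ≤ liminf (fun j => ∫⁻ ω, η (ns j) ω ∂P) atTop :=
        lintegral_liminf_le fun j => hηm (ns j)
      _ ≤ liminf (fun _ : ℕ => (1:ℝ≥0∞)) atTop :=
        liminf_le_liminf (Filter.Eventually.of_forall fun j => hηv (ns j) P hP)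
      _ = 1 := liminf_const 1
  have hηfin : ∀ j ω, η (ns j) ω ≠ ∞ := fun j ω => ne_top_of_le_ne_top hβtop (hηb (ns j) ω)
  have hconv : ∀ᵐ ω ∂Q, Tendsto (fun j => η (ns j) ω) atTop (𝓝 (εs ω)) := by
    have hall : ∀ᵐ ω ∂Q, ∀ j : ℕ, (η (ns j) ω).toReal = G (ns j) ω :=
      (MeasureTheory.ae_all_iff).mpr fun j => hηae (ns j)
    filter_upwards [hae, hall] with ω h1 h2
    have h3 : Tendsto (fun j => (η (ns j) ω).toReal) atTop (𝓝 (F ω)) :=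
      h1.congr fun j => (h2 j).symm
    have h4 : Tendsto (fun j => η (ns j) ω) atTop (𝓝 (ENNReal.ofReal (F ω))) := by
      have h5 := (ENNReal.continuous_ofReal.tendsto _).comp h3
      have h6 : ∀ j, ENNReal.ofReal ((η (ns j) ω).toReal) = η (ns j) ω := fun j =>
        ENNReal.ofReal_toReal (hηfin j ω)
      simpa only [Function.comp_def, h6] using h5
    have h7 : εs ω = ENNReal.ofReal (F ω) := h4.liminf_eq
    rw [h7]
    exact h4
  -- the θ-scaling argument
  set θ : ℕ → ℝ≥0∞ := fun m => 1 - ((m:ℝ≥0∞)+1)⁻¹ with hθdef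
  have hθle : ∀ m, θ m ≤ 1 := fun m => tsub_le_self
  have hθtop : ∀ m, θ m ≠ ∞ := fun m => ne_top_of_le_ne_top one_ne_top (hθle m)
  have hθlt : ∀ m, θ m < 1 := fun m =>
    ENNReal.sub_lt_self one_ne_top one_ne_zero
      (ENNReal.inv_ne_zero.mpr (by simp))
  have hθmono : Monotone θ := fun a b h => by
    apply tsub_le_tsub_left
    rw [ENNReal.inv_le_inv]
    exact add_le_add_left (Nat.cast_le.mpr h) 1
  have hθtend : Tendsto θ atTop (𝓝 1) := by
    have h1 : Tendsto (fun m : ℕ => ((m:ℝ≥0∞)+1)⁻¹) atTop (𝓝 0) := by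
      have h2 := ENNReal.tendsto_inv_nat_nhds_zero.comp (tendsto_add_atTop_nat 1)
      simpa [Function.comp_def] using h2
    have h3 := ((ENNReal.continuous_sub_left one_ne_top).tendsto 0).comp h1
    simpa [Function.comp_def, hθdef] using h3
  have hθsup : ⨆ m, θ m = 1 := tendsto_nhds_unique (tendsto_atTop_iSup hθmono) hθtend
  have hθβ : ∀ m, θ m * β < β := by
    intro m
    calc θ m * β < 1 * β := by
          refine ENNReal.mul_lt_mul_left hβ0 hβtop ?_
          exact hθlt m
      _ = β := one_mul β
  have hθxβ : ∀ (m : ℕ) (x : ℝ≥0∞), x ≤ β → θ m * x ≤ β := fun m x hx =>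
    le_trans (mul_le_mul_right hx _) (le_of_lt (hθβ m))
  have husub : Tendsto (fun j => u (ns j)) atTop (𝓝 S) := hutend.comp hnsmono.tendsto_atTop
  -- key lower bound for each θ m
  have key1 : ∀ m : ℕ, θ m * S ≤ ∫⁻ ω, U (θ m * εs ω) ∂Q := by
    intro m
    have hUbnd : U (θ m * β) ≠ ∞ := hUfin _ (hθβ m)
    have hDCT : Tendsto (fun j => ∫⁻ ω, U (θ m * η (ns j) ω) ∂Q) atTop
        (𝓝 (∫⁻ ω, U (θ m * εs ω) ∂Q)) := by
      refine tendsto_lintegral_of_dominated_convergence (fun _ => U (θ m * β))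
        (fun j => measurable_U_comp hUc ((hηm (ns j)).const_mul _)
          (fun ω => hθxβ m _ (hηb (ns j) ω)))
        (fun j => ae_of_all Q fun ω => ?_) (by simp [hUbnd, lt_top_iff_ne_top]) ?_
      · exact hUmono ⟨zero_le, hθxβ m _ (hηb (ns j) ω)⟩
          ⟨zero_le, le_of_lt (hθβ m)⟩ (mul_le_mul_right (hηb (ns j) ω) _)
      · filter_upwards [hconv] with ω hω
        have h1 : Tendsto (fun j => θ m * η (ns j) ω) atTop (𝓝 (θ m * εs ω)) :=
          ENNReal.Tendsto.const_mul hω (Or.inr (hθtop m))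
        have h2 : ContinuousWithinAt U (Icc 0 β) (θ m * εs ω) :=
          hUc _ ⟨zero_le, hθxβ m _ (hεsb ω)⟩
        exact h2.tendsto.comp (tendsto_nhdsWithin_of_tendsto_nhds_of_eventually_within _ h1
          (Filter.Eventually.of_forall fun j => ⟨zero_le, hθxβ m _ (hηb (ns j) ω)⟩))
    have hlow : ∀ j, θ m * u (ns j) ≤ ∫⁻ ω, U (θ m * η (ns j) ω) ∂Q := by
      intro j
      calc θ m * u (ns j) ≤ θ m * I (η (ns j)) := mul_le_mul_right (hηI (ns j)) _
        _ = ∫⁻ ω, θ m * U (η (ns j) ω) ∂Q :=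
          (lintegral_const_mul _ (measurable_U_comp hUc (hηm (ns j)) (hηb (ns j)))).symm
        _ ≤ ∫⁻ ω, U (θ m * η (ns j) ω) ∂Q :=
          lintegral_mono fun ω => superhom hU0 hconc (hηb (ns j) ω) (hθle m)
    have hltend : Tendsto (fun j => θ m * u (ns j)) atTop (𝓝 (θ m * S)) :=
      ENNReal.Tendsto.const_mul husub (Or.inr (hθtop m))
    exact le_of_tendsto_of_tendsto' hltend hDCT hlow
  -- conclusion
  refine ⟨εs, ⟨hεsm, hεsb, hεsv⟩, ?_⟩
  have hmt : ∀ ω, Monotone fun m => U (θ m * εs ω) := by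
    intro ω a b hab
    exact hUmono ⟨zero_le, hθxβ a _ (hεsb ω)⟩ ⟨zero_le, hθxβ b _ (hεsb ω)⟩
      (mul_le_mul_left (hθmono hab) _)
  have hpoint : ∀ ω, ⨆ m, U (θ m * εs ω) = U (εs ω) := by
    intro ω
    have hx := hεsb ω
    have hxfin : εs ω ≠ ∞ := ne_top_of_le_ne_top hβtop hx
    have htnd : Tendsto (fun m => θ m * εs ω) atTop (𝓝 (εs ω)) := by
      have h1 := ENNReal.Tendsto.mul_const hθtend (Or.inr hxfin)
      simpa using h1
    have hU2 : Tendsto (fun m => U (θ m * εs ω)) atTop (𝓝 (U (εs ω))) :=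
      (hUc _ ⟨zero_le, hx⟩).tendsto.comp
        (tendsto_nhdsWithin_of_tendsto_nhds_of_eventually_within _ htnd
          (Filter.Eventually.of_forall fun m => ⟨zero_le, hθxβ m _ hx⟩))
    exact tendsto_nhds_unique (tendsto_atTop_iSup (hmt ω)) hU2
  calc S = (⨆ m, θ m) * S := by rw [hθsup, one_mul]
    _ = ⨆ m, θ m * S := iSup_mul θ S
    _ ≤ ⨆ m, ∫⁻ ω, U (θ m * εs ω) ∂Q := iSup_mono key1
    _ = ∫⁻ ω, ⨆ m, U (θ m * εs ω) ∂Q := by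
        rw [lintegral_iSup (fun m => measurable_U_comp hUc (hεsm.const_mul _)
          (fun ω => hθxβ m _ (hεsb ω))) (fun a b hab ω => hmt ω hab)]
    _ = I εs := by
        rw [hIdef]
        exact lintegral_congr fun ω => hpoint ω

end OptTestAux

/-- A valid level-`α` expected-utility-optimal continuous test exists for an
arbitrary (possibly composite) hypothesis `H` against a simple alternative `Q`:
there is a measurable `ε* : Ω → [0, 1/α]` with `E_P[ε*] ≤ 1` for all `P ∈ H`
maximizing `E_Q[U(ε)]` over all such tests. -/
theorem exists_expected_utility_optimal_test
    {Ω : Type*} [MeasurableSpace Ω]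
    (H : Set (Measure Ω)) (hH : ∀ P ∈ H, IsProbabilityMeasure P)
    (Q : Measure Ω) [IsProbabilityMeasure Q]
    (α : ℝ≥0∞) (hα : 0 < α)
    (U D : ℝ≥0∞ → ℝ≥0∞) (hU : IsUtility α U D) :
    ∃ εs : Ω → ℝ≥0∞, Measurable εs ∧ (∀ ω, εs ω ≤ α⁻¹) ∧
      (∀ P ∈ H, ∫⁻ ω, εs ω ∂P ≤ 1) ∧
      ∀ ε : Ω → ℝ≥0∞, Measurable ε → (∀ ω, ε ω ≤ α⁻¹) →
        (∀ P ∈ H, ∫⁻ ω, ε ω ∂P ≤ 1) →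
        ∫⁻ ω, U (ε ω) ∂Q ≤ ∫⁻ ω, U (εs ω) ∂Q := by
  obtain ⟨hU0, hUmono, hconc, hUc, hUfin, -, -, -, -⟩ := hU
  exact OptTestAux.test H hH Q α hα U hU0 hUmono hconc hUc hUfin
end

section
/- Let α > 0, let H be a set of probability measures and Q a probability measure on Ω, let U be a utility function on [0, 1/α], and let E_α be the set of valid level-α continuous tests for H. For ε* ∈ E_α the following are equivalent: (1) E_Q[U(ε)] − E_Q[U(ε*)] ≤ 0 for all ε ∈ E_α; (2) E_Q[U'(ε*)·(ε − ε*)] ≤ 0 for all ε ∈ E_α, where 0·∞ is understood as 0. -/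
open MeasureTheory ENNReal NNReal Set Filter Topology

namespace FOCAux

variable {α : ℝ≥0∞} {U D : ℝ≥0∞ → ℝ≥0∞}

lemma measComp {Ω : Type*} [MeasurableSpace Ω] {F : ℝ≥0∞ → ℝ≥0∞} {c : ℝ≥0∞}
    (hF : ContinuousOn F (Icc 0 c)) {g : Ω → ℝ≥0∞} (hg : Measurable g)
    (hgb : ∀ ω, g ω ≤ c) : Measurable fun ω => F (g ω) := by
  have h1 : Continuous ((Icc (0:ℝ≥0∞) c).restrict F) :=
    continuousOn_iff_continuous_restrict.mp hF
  have h2 : Measurable fun ω => (⟨g ω, ⟨zero_le, hgb ω⟩⟩ : Icc (0:ℝ≥0∞) c) :=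
    hg.subtype_mk
  exact h1.measurable.comp h2

/-- `U` is finite at `α⁻¹` (hence everywhere on the domain). -/
lemma Ufin (hU : IsUtility α U D) (hc0 : α⁻¹ ≠ 0) (hct : α⁻¹ ≠ ∞) : U α⁻¹ ≠ ∞ := by
  intro h
  have hmem : α⁻¹ ∈ Icc (0:ℝ≥0∞) α⁻¹ := ⟨zero_le, le_rfl⟩
  have h0 : (0:ℝ≥0∞) ∈ Icc (0:ℝ≥0∞) α⁻¹ := ⟨le_rfl, zero_le⟩
  have hcc := hU.concaveOn _ hmem _ h0 2⁻¹ (by simp [ENNReal.inv_le_one])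
  simp only [hU.map_zero, mul_zero, add_zero] at hcc
  rw [h, ENNReal.mul_top (by norm_num)] at hcc
  have hlt : 2⁻¹ * α⁻¹ < α⁻¹ := by
    rw [← ENNReal.div_eq_inv_mul]
    exact ENNReal.half_lt_self hc0 hct
  exact hU.finite_of_lt _ hlt (top_le_iff.mp hcc)

lemma Dfin (hU : IsUtility α U D) (hc0 : α⁻¹ ≠ 0) (hct : α⁻¹ ≠ ∞) :
    ∀ z : ℝ≥0∞, 0 < z → z ≤ α⁻¹ → D z ≠ ∞ := by
  intro z hz0 hzc
  rcases lt_or_eq_of_le hzc with h | h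
  · exact hU.deriv_finite z hz0 h
  · have hhalf : z / 2 < z := ENNReal.half_lt_self hz0.ne' (h ▸ hct)
    have h1 : D z ≤ D (z / 2) :=
      hU.deriv_antitoneOn ⟨zero_le, hhalf.le.trans hzc⟩ ⟨zero_le, hzc⟩ hhalf.le
    exact fun ht => hU.deriv_finite (z/2) (ENNReal.div_pos hz0.ne' (by norm_num))
      (hhalf.trans_le hzc) (top_le_iff.mp (ht ▸ h1))

/-- Mean value step on the interior. -/
lemma slope (hU : IsUtility α U D) {x y : ℝ≥0∞}
    (hxy : x < y) (hyc : y < α⁻¹) :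
    ∃ ξ : ℝ≥0∞, x < ξ ∧ ξ < y ∧
      (U y).toReal - (U x).toReal = (D ξ).toReal * (y.toReal - x.toReal) := by
  have hyt : y ≠ ∞ := ne_top_of_lt hyc
  have hxt : x ≠ ∞ := ne_top_of_lt hxy
  set a := x.toReal with ha
  set b := y.toReal with hb
  have hab : a < b := (ENNReal.toReal_lt_toReal hxt hyt).mpr hxy
  have ha0 : 0 ≤ a := ENNReal.toReal_nonneg
  set f : ℝ → ℝ := fun t => (U (ENNReal.ofReal t)).toReal with hf
  have hmaps : ∀ t ∈ Icc a b, ENNReal.ofReal t ∈ Icc (0:ℝ≥0∞) α⁻¹ := by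
    intro t ht
    refine ⟨zero_le, ?_⟩
    calc ENNReal.ofReal t ≤ ENNReal.ofReal b := ENNReal.ofReal_le_ofReal ht.2
    _ = y := ENNReal.ofReal_toReal hyt
    _ ≤ α⁻¹ := hyc.le
  have hfin : ∀ t ∈ Icc a b, U (ENNReal.ofReal t) ≠ ∞ := by
    intro t ht
    rcases lt_or_eq_of_le (hmaps t ht).2 with h | h
    · exact hU.finite_of_lt _ h
    · exfalso
      have : ENNReal.ofReal t ≤ y := by
        calc ENNReal.ofReal t ≤ ENNReal.ofReal b := ENNReal.ofReal_le_ofReal ht.2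
        _ = y := ENNReal.ofReal_toReal hyt
      exact absurd (h ▸ this) (not_le.mpr hyc)
  have hcont : ContinuousOn f (Icc a b) := by
    intro t ht
    have h1 : ContinuousWithinAt (fun t : ℝ => U (ENNReal.ofReal t)) (Icc a b) t :=
      (hU.continuousOn _ (hmaps t ht)).comp
        ENNReal.continuous_ofReal.continuousWithinAt hmaps
    exact (ENNReal.continuousAt_toReal (hfin t ht)).tendsto.comp h1
  have hderiv : ∀ t ∈ Ioo a b, HasDerivAt f ((D (ENNReal.ofReal t)).toReal) t := by
    intro t ht
    refine hU.hasDerivAt t (lt_of_le_of_lt ha0 ht.1) ?_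
    calc ENNReal.ofReal t < ENNReal.ofReal b :=
      (ENNReal.ofReal_lt_ofReal_iff (lt_of_le_of_lt ha0 ht.1 |>.trans ht.2)).mpr ht.2
    _ = y := ENNReal.ofReal_toReal hyt
    _ ≤ α⁻¹ := hyc.le
  obtain ⟨ξ, hξ, heq⟩ := exists_hasDerivAt_eq_slope f _ hab hcont hderiv
  refine ⟨ENNReal.ofReal ξ, ?_, ?_, ?_⟩
  · calc x = ENNReal.ofReal a := (ENNReal.ofReal_toReal hxt).symm
    _ < ENNReal.ofReal ξ := by
        rw [ENNReal.ofReal_lt_ofReal_iff (lt_of_le_of_lt ha0 hξ.1)]; exact hξ.1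
  · have h2 : ENNReal.ofReal ξ < ENNReal.ofReal b :=
      (ENNReal.ofReal_lt_ofReal_iff (ha0.trans_lt hab)).mpr hξ.2
    rwa [ENNReal.ofReal_toReal hyt] at h2
  · have hba : b - a ≠ 0 := sub_ne_zero.mpr hab.ne'
    have : (D (ENNReal.ofReal ξ)).toReal * (b - a) = f b - f a := by
      rw [heq]; field_simp
    rw [this, hf]
    simp only [hb, ha, ENNReal.ofReal_toReal hxt, ENNReal.ofReal_toReal hyt]

lemma L1lt (hU : IsUtility α U D) {x d : ℝ≥0∞} (hd : 0 < d) (hyc : x + d < α⁻¹) :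
    U x + D (x + d) * d ≤ U (x + d) := by
  have hxd : x < x + d := lt_add_right (ne_top_of_lt (le_self_add.trans_lt hyc)) hd.ne'
  obtain ⟨ξ, hxξ, hξy, heq⟩ := slope hU hxd hyc
  have hxt : x ≠ ∞ := ne_top_of_lt hxd
  have hdt : d ≠ ∞ := ne_top_of_lt (le_add_self.trans_lt hyc)
  have hξfin : D ξ ≠ ∞ := hU.deriv_finite ξ (hxξ.trans_le' zero_le) (hξy.trans hyc)
  have hyfin : D (x + d) ≠ ∞ := hU.deriv_finite _ (hxd.trans_le' zero_le) hyc
  have hDle : (D (x + d)).toReal ≤ (D ξ).toReal := by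
    refine (ENNReal.toReal_le_toReal hyfin hξfin).mpr ?_
    exact hU.deriv_antitoneOn ⟨zero_le, (hξy.trans hyc).le⟩ ⟨zero_le, hyc.le⟩ hξy.le
  have hΔ : (x + d).toReal - x.toReal = d.toReal := by
    rw [ENNReal.toReal_add hxt hdt]; ring
  have hUxfin : U x ≠ ∞ := hU.finite_of_lt _ (hxd.trans hyc)
  have hUyfin : U (x + d) ≠ ∞ := hU.finite_of_lt _ hyc
  have key : (U x).toReal + (D (x+d)).toReal * d.toReal ≤ (U (x+d)).toReal := by
    rw [hΔ] at heq
    nlinarith [ENNReal.toReal_nonneg (a := d), heq]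
  have hlfin : U x + D (x + d) * d ≠ ∞ :=
    ENNReal.add_ne_top.mpr ⟨hUxfin, ENNReal.mul_ne_top hyfin hdt⟩
  rw [← ENNReal.toReal_le_toReal hlfin hUyfin, ENNReal.toReal_add hUxfin
    (ENNReal.mul_ne_top hyfin hdt), ENNReal.toReal_mul]
  exact key

lemma L2lt (hU : IsUtility α U D) {x d : ℝ≥0∞} (hd : 0 < d) (hyc : x + d < α⁻¹) :
    U (x + d) ≤ U x + D x * d := by
  by_cases hDx : D x = ∞
  · rw [hDx, ENNReal.top_mul hd.ne', add_top]; exact le_top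
  have hxd : x < x + d := lt_add_right (ne_top_of_lt (le_self_add.trans_lt hyc)) hd.ne'
  obtain ⟨ξ, hxξ, hξy, heq⟩ := slope hU hxd hyc
  have hxt : x ≠ ∞ := ne_top_of_lt hxd
  have hdt : d ≠ ∞ := ne_top_of_lt (le_add_self.trans_lt hyc)
  have hξfin : D ξ ≠ ∞ := hU.deriv_finite ξ (hxξ.trans_le' zero_le) (hξy.trans hyc)
  have hDle : (D ξ).toReal ≤ (D x).toReal := by
    refine (ENNReal.toReal_le_toReal hξfin hDx).mpr ?_
    exact hU.deriv_antitoneOn ⟨zero_le, (hxd.trans hyc).le⟩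
      ⟨zero_le, (hξy.trans hyc).le⟩ hxξ.le
  have hΔ : (x + d).toReal - x.toReal = d.toReal := by
    rw [ENNReal.toReal_add hxt hdt]; ring
  have hUxfin : U x ≠ ∞ := hU.finite_of_lt _ (hxd.trans hyc)
  have hUyfin : U (x + d) ≠ ∞ := hU.finite_of_lt _ hyc
  have key : (U (x+d)).toReal ≤ (U x).toReal + (D x).toReal * d.toReal := by
    rw [hΔ] at heq
    nlinarith [ENNReal.toReal_nonneg (a := d), heq]
  have hrfin : U x + D x * d ≠ ∞ :=
    ENNReal.add_ne_top.mpr ⟨hUxfin, ENNReal.mul_ne_top hDx hdt⟩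
  rw [← ENNReal.toReal_le_toReal hUyfin hrfin, ENNReal.toReal_add hUxfin
    (ENNReal.mul_ne_top hDx hdt), ENNReal.toReal_mul]
  exact key

lemma neBotIoo {x : ℝ≥0∞} (hx : x < α⁻¹) : (𝓝[Ioo x α⁻¹] α⁻¹).NeBot := by
  haveI : NeZero α⁻¹ := ⟨fun h => by simp [h] at hx⟩
  have h1 : Ioi x ∈ 𝓝[Iio α⁻¹] α⁻¹ := mem_nhdsWithin_of_mem_nhds (Ioi_mem_nhds hx)
  have h2 : 𝓝[Iio α⁻¹ ∩ Ioi x] α⁻¹ = 𝓝[Iio α⁻¹] α⁻¹ := nhdsWithin_inter_of_mem' h1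
  have h3 : Ioo x α⁻¹ = Iio α⁻¹ ∩ Ioi x := by ext z; simp [and_comm]
  rw [h3, h2]
  exact nhdsLT_neBot_of_exists_lt ⟨x, hx⟩

lemma tendstoU (hU : IsUtility α U D) {x : ℝ≥0∞} (hx : x < α⁻¹) :
    Tendsto U (𝓝[Ioo x α⁻¹] α⁻¹) (𝓝 (U α⁻¹)) :=
  (hU.continuousOn.continuousWithinAt ⟨zero_le, le_rfl⟩).mono_left
    (nhdsWithin_mono _ fun z hz => ⟨zero_le, hz.2.le⟩)

lemma L1' (hU : IsUtility α U D) (hc0 : α⁻¹ ≠ 0) (hct : α⁻¹ ≠ ∞) {x d : ℝ≥0∞}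
    (h : x + d ≤ α⁻¹) : U x + D (x + d) * d ≤ U (x + d) := by
  rcases eq_or_lt_of_le ((zero_le (a := d))) with hd | hd
  · simp [← hd]
  rcases lt_or_eq_of_le h with hlt | heq
  · exact L1lt hU hd hlt
  have hxt : x ≠ ∞ := fun hx => hct (by rw [hx] at heq; exact heq.symm)
  have hdt : d ≠ ∞ := fun hd' => hct (by rw [hd'] at heq; simp at heq; exact heq.symm)
  have hx : x < α⁻¹ := heq ▸ lt_add_right hxt hd.ne'
  haveI := neBotIoo (α := α) hx
  have hDc : D α⁻¹ ≠ ∞ := Dfin hU hc0 hct _ (hx.trans_le' zero_le) le_rfl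
  have hf : Tendsto (fun z => U x + D α⁻¹ * (z - x)) (𝓝[Ioo x α⁻¹] α⁻¹)
      (𝓝 (U x + D α⁻¹ * (α⁻¹ - x))) := by
    have hcont : Continuous (fun z : ℝ≥0∞ => U x + D α⁻¹ * (z - x)) :=
      continuous_const.add ((ENNReal.continuous_const_mul hDc).comp
        (ENNReal.continuous_sub_right x))
    exact (hcont.tendsto _).mono_left nhdsWithin_le_nhds
  have hle : ∀ᶠ z in 𝓝[Ioo x α⁻¹] α⁻¹,
      U x + D α⁻¹ * (z - x) ≤ U z := by
    filter_upwards [eventually_mem_nhdsWithin] with z hz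
    have h1 : x + (z - x) = z := add_tsub_cancel_of_le hz.1.le
    have h2 : 0 < z - x := tsub_pos_of_lt hz.1
    have h3 := L1lt hU h2 (h1 ▸ hz.2)
    rw [h1] at h3
    refine le_trans (add_le_add_right (mul_le_mul_left ?_ _) _) h3
    exact hU.deriv_antitoneOn ⟨zero_le, hz.2.le⟩ ⟨zero_le, le_rfl⟩ hz.2.le
  have := le_of_tendsto_of_tendsto hf (tendstoU hU hx) hle
  rw [← heq, ENNReal.add_sub_cancel_left hxt] at this
  exact this

lemma L2' (hU : IsUtility α U D) (hct : α⁻¹ ≠ ∞) {x d : ℝ≥0∞}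
    (h : x + d ≤ α⁻¹) : U (x + d) ≤ U x + D x * d := by
  rcases eq_or_lt_of_le ((zero_le (a := d))) with hd | hd
  · simp [← hd]
  rcases lt_or_eq_of_le h with hlt | heq
  · exact L2lt hU hd hlt
  have hxt : x ≠ ∞ := fun hx => hct (by rw [hx] at heq; exact heq.symm)
  have hdt : d ≠ ∞ := fun hd' => hct (by rw [hd'] at heq; simp at heq; exact heq.symm)
  have hx : x < α⁻¹ := heq ▸ lt_add_right hxt hd.ne'
  haveI := neBotIoo (α := α) hx
  have hle : ∀ᶠ z in 𝓝[Ioo x α⁻¹] α⁻¹, U z ≤ U x + D x * d := by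
    filter_upwards [eventually_mem_nhdsWithin] with z hz
    have h1 : x + (z - x) = z := add_tsub_cancel_of_le hz.1.le
    have h2 : 0 < z - x := tsub_pos_of_lt hz.1
    have h3 := L2lt hU h2 (h1 ▸ hz.2)
    rw [h1] at h3
    have h4 : z - x ≤ d := tsub_le_iff_left.mpr (heq ▸ hz.2.le)
    exact h3.trans (add_le_add_right (mul_le_mul_right h4 _) _)
  have := le_of_tendsto (tendstoU hU hx) hle
  rw [heq]
  exact this

lemma L0 (hU : IsUtility α U D) (hc0 : α⁻¹ ≠ 0) (hct : α⁻¹ ≠ ∞) {b : ℝ≥0∞}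
    (hb : b ≤ α⁻¹) : D b * b ≤ U b := by
  have := L1' hU hc0 hct (x := 0) (d := b) (by simpa using hb)
  simpa [hU.map_zero] using this

/-- Gradient inequality `U a + D b * b ≤ U b + D b * a`. -/
lemma star1 (hU : IsUtility α U D) (hc0 : α⁻¹ ≠ 0) (hct : α⁻¹ ≠ ∞) {a b : ℝ≥0∞}
    (ha : a ≤ α⁻¹) (hb : b ≤ α⁻¹) : U a + D b * b ≤ U b + D b * a := by
  rcases lt_trichotomy a b with h | h | h
  · obtain ⟨d, hd⟩ : ∃ d, b = a + d := ⟨b - a, (add_tsub_cancel_of_le h.le).symm⟩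
    subst hd
    have h1 := L1' hU hc0 hct (x := a) (d := d) hb
    calc U a + D (a + d) * (a + d) = (U a + D (a + d) * d) + D (a + d) * a := by
          rw [mul_add]; ring
    _ ≤ U (a + d) + D (a + d) * a := add_le_add_left h1 _
  · subst h; rfl
  · obtain ⟨d, hd⟩ : ∃ d, a = b + d := ⟨a - b, (add_tsub_cancel_of_le h.le).symm⟩
    subst hd
    have h1 := L2' hU hct (x := b) (d := d) ha
    calc U (b + d) + D b * b ≤ (U b + D b * d) + D b * b := add_le_add_left h1 _
    _ = U b + D b * (b + d) := by rw [mul_add]; ring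

/-- Gradient inequality at the interpolation point `x = (1-t)a + tb`. -/
lemma star2 (hU : IsUtility α U D) (hc0 : α⁻¹ ≠ 0) (hct : α⁻¹ ≠ ∞) {a b t : ℝ≥0∞}
    (ha : a ≤ α⁻¹) (hb : b ≤ α⁻¹) (ht1 : t ≤ 1) :
    U a + t * (D ((1-t)*a + t*b) * b) ≤
      U ((1-t)*a + t*b) + t * (D ((1-t)*a + t*b) * a) := by
  have hsum : (1-t) + t = 1 := tsub_add_cancel_of_le ht1
  rcases lt_trichotomy a b with h | h | h
  · obtain ⟨d, hd⟩ : ∃ d, b = a + d := ⟨b - a, (add_tsub_cancel_of_le h.le).symm⟩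
    subst hd
    have hx : (1-t)*a + t*(a+d) = a + t*d := by
      rw [mul_add, ← add_assoc, ← add_mul, hsum, one_mul]
    rw [hx]
    have hle : a + t*d ≤ α⁻¹ :=
      le_trans (add_le_add_right (mul_le_mul_left ht1 d |>.trans_eq (one_mul d)) a) hb
    have h1 := L1' hU hc0 hct (x := a) (d := t*d) hle
    calc U a + t * (D (a + t*d) * (a+d))
        = (U a + D (a + t*d) * (t*d)) + t * (D (a + t*d) * a) := by ring
    _ ≤ U (a + t*d) + t * (D (a + t*d) * a) := add_le_add_left h1 _
  · subst h
    have hx : (1-t)*a + t*a = a := by rw [← add_mul, hsum, one_mul]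
    rw [hx]
  · obtain ⟨d, hd⟩ : ∃ d, a = b + d := ⟨a - b, (add_tsub_cancel_of_le h.le).symm⟩
    subst hd
    have hx : (1-t)*(b+d) + t*b = b + (1-t)*d := by
      rw [mul_add, add_right_comm, ← add_mul, hsum, one_mul]
    rw [hx]
    have hxa : (b + (1-t)*d) + t*d = b + d := by
      rw [add_assoc, ← add_mul, hsum, one_mul]
    have hle : (b + (1-t)*d) + t*d ≤ α⁻¹ := hxa ▸ ha
    have h1 := L2' hU hct (x := b + (1-t)*d) (d := t*d) hle
    rw [hxa] at h1
    calc U (b+d) + t * (D (b + (1-t)*d) * b)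
        ≤ (U (b + (1-t)*d) + D (b + (1-t)*d) * (t*d)) + t * (D (b + (1-t)*d) * b) :=
          add_le_add_left h1 _
    _ = U (b + (1-t)*d) + t * (D (b + (1-t)*d) * (b+d)) := by ring

end FOCAux

/-- First-order conditions for expected-utility optimality (Lemma `lem:FOC`):
for `α > 0` and `ε*` a valid level-`α` continuous test for `H`, the following
are equivalent: (1) `E_Q[U(ε)] − E_Q[U(ε*)] ≤ 0` for all valid level-`α`
continuous tests `ε`; (2) `E_Q[U'(ε*)·(ε − ε*)] ≤ 0` for all valid level-`α`
continuous tests `ε` (stated as `E_Q[U'(ε*)·ε] ≤ E_Q[U'(ε*)·ε*]`, where in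
`ℝ≥0∞` the product `0·∞` is `0`). -/
theorem first_order_condition_iff_optimal
    {Ω : Type*} [MeasurableSpace Ω]
    (H : Set (Measure Ω)) (hH : ∀ P ∈ H, IsProbabilityMeasure P)
    (Q : Measure Ω) [IsProbabilityMeasure Q]
    (α : ℝ≥0∞) (hα : 0 < α)
    (U D : ℝ≥0∞ → ℝ≥0∞) (hU : IsUtility α U D)
    (εs : Ω → ℝ≥0∞) (hεsm : Measurable εs) (hεsb : ∀ ω, εs ω ≤ α⁻¹)
    (hεsval : ∀ P ∈ H, ∫⁻ ω, εs ω ∂P ≤ 1) :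
    (∀ ε : Ω → ℝ≥0∞, Measurable ε → (∀ ω, ε ω ≤ α⁻¹) →
        (∀ P ∈ H, ∫⁻ ω, ε ω ∂P ≤ 1) →
        ∫⁻ ω, U (ε ω) ∂Q ≤ ∫⁻ ω, U (εs ω) ∂Q)
      ↔
    (∀ ε : Ω → ℝ≥0∞, Measurable ε → (∀ ω, ε ω ≤ α⁻¹) →
        (∀ P ∈ H, ∫⁻ ω, ε ω ∂P ≤ 1) →
        ∫⁻ ω, D (εs ω) * ε ω ∂Q ≤ ∫⁻ ω, D (εs ω) * εs ω ∂Q) := by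
  by_cases hdeg : α⁻¹ = 0
  · have hzero : ∀ (g : Ω → ℝ≥0∞), (∀ ω, g ω ≤ α⁻¹) → ∀ ω, g ω = 0 :=
      fun g hg ω => le_antisymm ((hg ω).trans hdeg.le) (zero_le)
    constructor <;> intro _ ε hm hb hv <;>
      exact le_of_eq (lintegral_congr fun ω => by rw [hzero ε hb ω, hzero εs hεsb ω])
  have hct : α⁻¹ ≠ ∞ := ENNReal.inv_ne_top.mpr hα.ne'
  have hUc : U α⁻¹ ≠ ∞ := FOCAux.Ufin hU hdeg hct
  have hmU : ∀ (g : Ω → ℝ≥0∞), Measurable g → (∀ ω, g ω ≤ α⁻¹) →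
      Measurable fun ω => U (g ω) :=
    fun g hg hgb => FOCAux.measComp hU.continuousOn hg hgb
  have hUint : ∀ (g : Ω → ℝ≥0∞), (∀ ω, g ω ≤ α⁻¹) → ∫⁻ ω, U (g ω) ∂Q ≤ U α⁻¹ := by
    intro g hg
    calc ∫⁻ ω, U (g ω) ∂Q ≤ ∫⁻ _, U α⁻¹ ∂Q := lintegral_mono fun ω =>
        hU.monotoneOn ⟨zero_le, hg ω⟩ ⟨zero_le, le_rfl⟩ (hg ω)
    _ = U α⁻¹ := by simp [lintegral_const, measure_univ]
  have hmDs : Measurable fun ω => D (εs ω) :=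
    FOCAux.measComp hU.deriv_continuousOn hεsm hεsb
  constructor
  · -- optimality implies first-order condition
    intro h1 ε hm hb hv
    set t : ℕ → ℝ≥0∞ := fun n => ((n : ℝ≥0∞) + 2)⁻¹ with hts
    have htop' : ∀ n : ℕ, ((n : ℝ≥0∞) + 2) ≠ ∞ :=
      fun n => ENNReal.add_ne_top.mpr ⟨ENNReal.natCast_ne_top n, by norm_num⟩
    have ht0 : ∀ n, t n ≠ 0 := fun n => ENNReal.inv_ne_zero.mpr (htop' n)
    have htop : ∀ n, t n ≠ ∞ := fun n => ENNReal.inv_ne_top.mpr (by simp)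
    have htle : ∀ n, t n ≤ 2⁻¹ := fun n => ENNReal.inv_le_inv.mpr le_add_self
    have ht1 : ∀ n, t n ≤ 1 := fun n => (htle n).trans (ENNReal.inv_le_one.mpr one_le_two)
    have htend : Tendsto t atTop (𝓝 0) := by
      have h := ENNReal.tendsto_inv_nat_nhds_zero.comp (tendsto_add_atTop_nat 2)
      have heq : (fun n : ℕ => ((n + 2 : ℕ) : ℝ≥0∞)⁻¹) = t := by
        funext n; rw [hts]; push_cast; ring_nf
      rw [← heq]; exact h
    set εt : ℕ → Ω → ℝ≥0∞ := fun n ω => (1 - t n) * εs ω + t n * ε ω with hεt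
    have hεtm : ∀ n, Measurable (εt n) :=
      fun n => (measurable_const.mul hεsm).add (measurable_const.mul hm)
    have hεtb : ∀ n ω, εt n ω ≤ α⁻¹ := by
      intro n ω
      calc εt n ω ≤ (1 - t n) * α⁻¹ + t n * α⁻¹ :=
        add_le_add (mul_le_mul_right (hεsb ω) _) (mul_le_mul_right (hb ω) _)
      _ = α⁻¹ := by rw [← add_mul, tsub_add_cancel_of_le (ht1 n), one_mul]
    have hεtval : ∀ n, ∀ P ∈ H, ∫⁻ ω, εt n ω ∂P ≤ 1 := by
      intro n P hP
      rw [hεt]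
      simp only
      rw [lintegral_add_left (f := fun ω => (1 - t n) * εs ω) (measurable_const.mul hεsm),
        lintegral_const_mul _ hεsm, lintegral_const_mul _ hm]
      calc (1 - t n) * ∫⁻ ω, εs ω ∂P + t n * ∫⁻ ω, ε ω ∂P ≤ (1 - t n) * 1 + t n * 1 :=
        add_le_add (mul_le_mul_right (hεsval P hP) _) (mul_le_mul_right (hv P hP) _)
      _ = 1 := by rw [mul_one, mul_one, tsub_add_cancel_of_le (ht1 n)]
    have hmDn : ∀ n, Measurable fun ω => D (εt n ω) :=
      fun n => FOCAux.measComp hU.deriv_continuousOn (hεtm n) (hεtb n)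
    have hεfin : ∀ ω, ε ω ≠ ∞ := fun ω => ne_top_of_le_ne_top hct (hb ω)
    have hεsfin : ∀ ω, εs ω ≠ ∞ := fun ω => ne_top_of_le_ne_top hct (hεsb ω)
    have hkey : ∀ n, ∫⁻ ω, D (εt n ω) * ε ω ∂Q ≤ ∫⁻ ω, D (εt n ω) * εs ω ∂Q := by
      intro n
      have hpt : ∀ ω, U (εs ω) + t n * (D (εt n ω) * ε ω) ≤
          U (εt n ω) + t n * (D (εt n ω) * εs ω) :=
        fun ω => FOCAux.star2 hU hdeg hct (hεsb ω) (hb ω) (ht1 n)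
      have hint := lintegral_mono (μ := Q) hpt
      rw [lintegral_add_left (hmU εs hεsm hεsb), lintegral_add_left (hmU _ (hεtm n) (hεtb n)),
        lintegral_const_mul _ (f := fun ω => D (εt n ω) * ε ω) ((hmDn n).mul hm),
        lintegral_const_mul _ (f := fun ω => D (εt n ω) * εs ω) ((hmDn n).mul hεsm)]
        at hint
      have h1' := h1 (εt n) (hεtm n) (hεtb n) (hεtval n)
      have hA : ∫⁻ ω, U (εs ω) ∂Q ≠ ∞ := ne_top_of_le_ne_top hUc (hUint εs hεsb)
      have h3 := (ENNReal.add_le_add_iff_left hA).mp (hint.trans (add_le_add_left h1' _))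
      exact (ENNReal.mul_le_mul_iff_right (ht0 n) (htop n)).mp h3
    have hptt : ∀ ω, Tendsto (fun n => εt n ω) atTop (𝓝 (εs ω)) := by
      intro ω
      have h1t : Tendsto (fun n => 1 - t n) atTop (𝓝 (1 - 0)) :=
        ENNReal.Tendsto.sub tendsto_const_nhds htend (Or.inl one_ne_top)
      rw [tsub_zero] at h1t
      have h2t : Tendsto (fun n => (1 - t n) * εs ω) atTop (𝓝 (1 * εs ω)) :=
        ENNReal.Tendsto.mul_const h1t (Or.inl one_ne_zero)
      have h3t : Tendsto (fun n => t n * ε ω) atTop (𝓝 (0 * ε ω)) :=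
        ENNReal.Tendsto.mul_const htend (Or.inr (hεfin ω))
      have h4t := h2t.add h3t
      rw [one_mul, zero_mul, add_zero] at h4t
      exact h4t
    have hDt : ∀ ω, Tendsto (fun n => D (εt n ω)) atTop (𝓝 (D (εs ω))) := by
      intro ω
      have hcw : ContinuousWithinAt D (Icc 0 α⁻¹) (εs ω) :=
        hU.deriv_continuousOn _ ⟨zero_le, hεsb ω⟩
      exact hcw.tendsto.comp (tendsto_nhdsWithin_of_tendsto_nhds_of_eventually_within _
        (hptt ω) (Eventually.of_forall fun n => ⟨zero_le, hεtb n ω⟩))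
    have hF : ∫⁻ ω, D (εs ω) * ε ω ∂Q ≤
        liminf (fun n => ∫⁻ ω, D (εt n ω) * ε ω ∂Q) atTop := by
      refine le_trans (le_of_eq (lintegral_congr fun ω => ?_))
        (lintegral_liminf_le fun n => (hmDn n).mul hm)
      exact ((ENNReal.Tendsto.mul_const (hDt ω) (Or.inr (hεfin ω))).liminf_eq).symm
    have hhalfb : ∀ ω, 2⁻¹ * εs ω ≤ α⁻¹ := by
      intro ω
      calc 2⁻¹ * εs ω ≤ 1 * εs ω := mul_le_mul_left (ENNReal.inv_le_one.mpr one_le_two) _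
      _ = εs ω := one_mul _
      _ ≤ α⁻¹ := hεsb ω
    have hbound_le : ∀ n ω, D (εt n ω) * εs ω ≤ D (2⁻¹ * εs ω) * εs ω := by
      intro n ω
      have hhalf_le : (2:ℝ≥0∞)⁻¹ ≤ 1 - t n := by
        rw [← ENNReal.one_sub_inv_two]
        exact tsub_le_tsub_left (htle n) 1
      have hge : 2⁻¹ * εs ω ≤ εt n ω :=
        le_trans (mul_le_mul_left hhalf_le (εs ω)) le_self_add
      exact mul_le_mul_left
        (hU.deriv_antitoneOn ⟨zero_le, hhalfb ω⟩ ⟨zero_le, hεtb n ω⟩ hge) _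
    have hbound_int : ∫⁻ ω, D (2⁻¹ * εs ω) * εs ω ∂Q ≠ ∞ := by
      have h22 : (2 : ℝ≥0∞) * 2⁻¹ = 1 := ENNReal.mul_inv_cancel two_ne_zero (by norm_num)
      have hpt : ∀ ω, D (2⁻¹ * εs ω) * εs ω ≤ 2 * U α⁻¹ := by
        intro ω
        have h0 := FOCAux.L0 hU hdeg hct (hhalfb ω)
        calc D (2⁻¹ * εs ω) * εs ω = D (2⁻¹ * εs ω) * ((2 * 2⁻¹) * εs ω) := by
              rw [h22, one_mul]
        _ = 2 * (D (2⁻¹ * εs ω) * (2⁻¹ * εs ω)) := by ring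
        _ ≤ 2 * U (2⁻¹ * εs ω) := mul_le_mul_right h0 2
        _ ≤ 2 * U α⁻¹ := mul_le_mul_right
            (hU.monotoneOn ⟨zero_le, hhalfb ω⟩ ⟨zero_le, le_rfl⟩ (hhalfb ω)) _
      refine ne_top_of_le_ne_top (ENNReal.mul_ne_top (ENNReal.ofNat_ne_top : (2:ℝ≥0∞) ≠ ∞) hUc) ?_
      calc ∫⁻ ω, D (2⁻¹ * εs ω) * εs ω ∂Q ≤ ∫⁻ _, 2 * U α⁻¹ ∂Q := lintegral_mono hpt
      _ = 2 * U α⁻¹ := by simp [lintegral_const, measure_univ]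
    have hDCT : Tendsto (fun n => ∫⁻ ω, D (εt n ω) * εs ω ∂Q) atTop
        (𝓝 (∫⁻ ω, D (εs ω) * εs ω ∂Q)) := by
      refine tendsto_lintegral_of_dominated_convergence _ (fun n => (hmDn n).mul hεsm)
        (fun n => Eventually.of_forall (hbound_le n)) hbound_int
        (Eventually.of_forall fun ω => ?_)
      exact ENNReal.Tendsto.mul_const (hDt ω) (Or.inr (hεsfin ω))
    calc ∫⁻ ω, D (εs ω) * ε ω ∂Q
        ≤ liminf (fun n => ∫⁻ ω, D (εt n ω) * ε ω ∂Q) atTop := hF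
    _ ≤ liminf (fun n => ∫⁻ ω, D (εt n ω) * εs ω ∂Q) atTop :=
        liminf_le_liminf (Eventually.of_forall hkey)
    _ = ∫⁻ ω, D (εs ω) * εs ω ∂Q := hDCT.liminf_eq
  · -- first-order condition implies optimality
    intro h2 ε hm hb hv
    have hpt : ∀ ω, U (ε ω) + D (εs ω) * εs ω ≤ U (εs ω) + D (εs ω) * ε ω :=
      fun ω => FOCAux.star1 hU hdeg hct (hb ω) (hεsb ω)
    have hint := lintegral_mono (μ := Q) hpt
    rw [lintegral_add_left (hmU ε hm hb), lintegral_add_left (hmU εs hεsm hεsb)] at hint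
    have hJfin : ∫⁻ ω, D (εs ω) * εs ω ∂Q ≠ ∞ := by
      refine ne_top_of_le_ne_top (ne_top_of_le_ne_top hUc (hUint εs hεsb)) ?_
      exact lintegral_mono fun ω => FOCAux.L0 hU hdeg hct (hεsb ω)
    have := hint.trans (add_le_add_right (h2 ε hm hb hv) _)
    exact (ENNReal.add_le_add_iff_right hJfin).mp this
end

section
/- Let 0 < α < ∞, let H be a set of probability measures and Q a probability measure on Ω, let U be a utility function on [0, 1/α] with lim_{x↓0} U'(x) = ∞, and let E_α be the set of valid level-α continuous tests for H. Then any maximizer ε* of ε ↦ E_Q[U(ε)] over E_α satisfies ε* > 0 Q-almost surely. -/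
open MeasureTheory ENNReal NNReal Set

/-- Auxiliary: since `D 0 = ∞` and `D` is continuous at `0`, by MVT for every
`K > 0` there is an arbitrarily small `v` with `U v ≥ K v`. -/
lemma exists_small_utility_gain (α : ℝ≥0∞) (hα0 : 0 < α) (hαtop : α ≠ ∞)
    (U D : ℝ≥0∞ → ℝ≥0∞) (hU : IsUtility α U D) (hD0 : D 0 = ∞)
    (c : ℝ≥0∞) (hc0 : c ≠ 0) (K : ℝ) (hK : 0 < K) :
    ∃ v : ℝ≥0∞, v ≠ 0 ∧ v ≠ ∞ ∧ v < c ∧ v < α⁻¹ ∧ ENNReal.ofReal K * v ≤ U v := by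
  have hαinv_pos : (0 : ℝ≥0∞) < α⁻¹ := ENNReal.inv_pos.mpr hαtop
  -- continuity of D at 0 gives: D is large near 0
  have hmem : Icc (0 : ℝ≥0∞) α⁻¹ ∈ nhds (0 : ℝ≥0∞) := by
    refine Filter.mem_of_superset (isOpen_Iio.mem_nhds hαinv_pos) ?_
    exact fun x hx => ⟨zero_le, le_of_lt hx⟩
  have hcont : Filter.Tendsto D (nhds 0) (nhds ∞) := by
    have h := hU.deriv_continuousOn 0 ⟨le_rfl, zero_le⟩
    rw [ContinuousWithinAt, nhdsWithin_eq_nhds.mpr hmem, hD0] at h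
    exact h
  have hev : ∀ᶠ x in nhds (0 : ℝ≥0∞), ENNReal.ofReal (2 * K) < D x :=
    hcont (isOpen_Ioi.mem_nhds (ENNReal.ofReal_lt_top : ENNReal.ofReal (2 * K) < ∞))
  obtain ⟨δ, hδ0, hδ⟩ := ENNReal.nhds_zero_basis.eventually_iff.mp hev
  -- choose a small finite positive v
  set m : ℝ≥0∞ := min δ (min c α⁻¹) with hm
  have hm0 : m ≠ 0 := (lt_min hδ0 (lt_min (zero_lt_iff.mpr hc0) hαinv_pos)).ne'
  set w : ℝ≥0∞ := min m 1 / 2 with hwdef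
  have hmin0 : min m 1 ≠ 0 := (lt_min (zero_lt_iff.mpr hm0) one_pos).ne'
  have hmintop : min m 1 ≠ ∞ := (lt_of_le_of_lt (min_le_right _ _) (by simp)).ne
  have hw_lt : w < min m 1 := ENNReal.half_lt_self hmin0 hmintop
  have hw_lt_m : w < m := lt_of_lt_of_le hw_lt (min_le_left _ _)
  have hw0 : w ≠ 0 := by
    simp [hwdef, ENNReal.div_eq_zero_iff, hmin0]
  have hwtop : w ≠ ∞ := (lt_of_lt_of_le hw_lt (le_trans (min_le_right _ _) le_top)).ne
  have hwδ : w < δ := lt_of_lt_of_le hw_lt_m (min_le_left _ _)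
  have hwc : w < c := lt_of_lt_of_le hw_lt_m (le_trans (min_le_right _ _) (min_le_left _ _))
  have hwα : w < α⁻¹ := lt_of_lt_of_le hw_lt_m (le_trans (min_le_right _ _) (min_le_right _ _))
  set y : ℝ := w.toReal with hydef
  have hy0 : 0 < y := ENNReal.toReal_pos hw0 hwtop
  have hwy : ENNReal.ofReal y = w := ENNReal.ofReal_toReal hwtop
  set f : ℝ → ℝ := fun s => (U (ENNReal.ofReal s)).toReal with hfdef
  have hderiv : ∀ s ∈ Icc (y / 2) y, HasDerivAt f ((D (ENNReal.ofReal s)).toReal) s := by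
    intro s hs
    have hs0 : 0 < s := lt_of_lt_of_le (by linarith) hs.1
    have hsα : ENNReal.ofReal s < α⁻¹ :=
      lt_of_le_of_lt (by rw [← hwy]; exact ENNReal.ofReal_le_ofReal hs.2) hwα
    exact hU.hasDerivAt s hs0 hsα
  obtain ⟨x, hx, hxe⟩ := exists_hasDerivAt_eq_slope f
    (fun s => (D (ENNReal.ofReal s)).toReal) (by linarith : y / 2 < y)
    (fun s hs => (hderiv s hs).continuousAt.continuousWithinAt)
    (fun s hs => hderiv s (Ioo_subset_Icc_self hs))
  have hx0 : 0 < x := lt_trans (by linarith) hx.1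
  have hxw : ENNReal.ofReal x < α⁻¹ :=
    lt_of_le_of_lt (by rw [← hwy]; exact ENNReal.ofReal_le_ofReal hx.2.le) hwα
  have hDfin : D (ENNReal.ofReal x) ≠ ∞ :=
    hU.deriv_finite _ (ENNReal.ofReal_pos.mpr hx0) hxw
  have hDx : ENNReal.ofReal (2 * K) < D (ENNReal.ofReal x) := by
    apply hδ
    exact lt_of_le_of_lt (by rw [← hwy]; exact ENNReal.ofReal_le_ofReal hx.2.le) hwδ
  have h2K : 2 * K < (D (ENNReal.ofReal x)).toReal :=
    (ENNReal.ofReal_lt_iff_lt_toReal (by linarith) hDfin).mp hDx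
  have hyy : y - y / 2 ≠ 0 := by
    have : (0:ℝ) < y - y / 2 := by linarith
    exact this.ne'
  have hslope : f y - f (y / 2) = (D (ENNReal.ofReal x)).toReal * (y - y / 2) := by
    rw [hxe, div_mul_cancel₀ _ hyy]
  have hfhalf : 0 ≤ f (y / 2) := ENNReal.toReal_nonneg
  have hfy : K * y ≤ f y := by nlinarith [hslope, h2K, hy0, hfhalf]
  have hUw : U w ≠ ∞ := hU.finite_of_lt w hwα
  refine ⟨w, hw0, hwtop, hwc, hwα, ?_⟩
  have : ENNReal.ofReal (K * y) ≤ U w := by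
    rw [← hwy]
    calc ENNReal.ofReal (K * y) ≤ ENNReal.ofReal (f y) := ENNReal.ofReal_le_ofReal hfy
      _ = U (ENNReal.ofReal y) := by
          rw [hfdef]
          exact ENNReal.ofReal_toReal (by rw [hwy]; exact hUw)
  calc ENNReal.ofReal K * w = ENNReal.ofReal (K * y) := by
        rw [ENNReal.ofReal_mul hK.le, hwy]
    _ ≤ U w := this

/-- Q-almost-sure positivity of the expected-utility optimal test: if
`0 < α < ∞` and `U` is a utility function on `[0, 1/α]` whose derivative
satisfies `U'(0) = lim_{x↓0} U'(x) = ∞`, then any valid level-`α` continuous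
test `ε*` for `H` maximizing `ε ↦ E_Q[U(ε)]` over valid level-`α` continuous
tests satisfies `ε* > 0` `Q`-almost surely. -/
theorem expected_utility_optimizer_ae_pos
    {Ω : Type*} [MeasurableSpace Ω]
    (H : Set (Measure Ω)) (hH : ∀ P ∈ H, IsProbabilityMeasure P)
    (Q : Measure Ω) [IsProbabilityMeasure Q]
    (α : ℝ≥0∞) (hα0 : 0 < α) (hαtop : α ≠ ∞)
    (U D : ℝ≥0∞ → ℝ≥0∞) (hU : IsUtility α U D) (hD0 : D 0 = ∞)
    (εs : Ω → ℝ≥0∞) (hεsm : Measurable εs) (hεsb : ∀ ω, εs ω ≤ α⁻¹)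
    (hεsval : ∀ P ∈ H, ∫⁻ ω, εs ω ∂P ≤ 1)
    (hopt : ∀ ε : Ω → ℝ≥0∞, Measurable ε → (∀ ω, ε ω ≤ α⁻¹) →
      (∀ P ∈ H, ∫⁻ ω, ε ω ∂P ≤ 1) → ∫⁻ ω, U (ε ω) ∂Q ≤ ∫⁻ ω, U (εs ω) ∂Q) :
    ∀ᵐ ω ∂Q, 0 < εs ω := by
  classical
  have hαinv_pos : (0 : ℝ≥0∞) < α⁻¹ := ENNReal.inv_pos.mpr hαtop
  have hαinv_top : α⁻¹ ≠ ∞ := (ENNReal.inv_lt_top.mpr hα0).ne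
  -- U is finite at α⁻¹ (hence everywhere on the domain)
  have hUtop : U α⁻¹ ≠ ∞ := by
    intro h
    have hcc := hU.concaveOn α⁻¹ ⟨zero_le, le_rfl⟩ 0 ⟨le_rfl, zero_le⟩
      2⁻¹ (by norm_num)
    rw [h, hU.map_zero] at hcc
    simp only [mul_zero, add_zero] at hcc
    rw [ENNReal.mul_top (by simp)] at hcc
    have hfin : U (2⁻¹ * α⁻¹) ≠ ∞ := by
      apply hU.finite_of_lt
      calc 2⁻¹ * α⁻¹ = α⁻¹ / 2 := by
            rw [ENNReal.div_eq_inv_mul]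
      _ < α⁻¹ := ENNReal.half_lt_self hαinv_pos.ne' hαinv_top
    exact hfin (top_le_iff.mp hcc)
  -- measurability of U ∘ εs
  have hUmin : Measurable (fun x : ℝ≥0∞ => U (min x α⁻¹)) := by
    have : Continuous (U ∘ fun x : ℝ≥0∞ => min x α⁻¹) :=
      hU.continuousOn.comp_continuous (continuous_id.min continuous_const)
        (fun x => ⟨zero_le, min_le_right _ _⟩)
    exact this.measurable
  have hUεs : Measurable (fun ω => U (εs ω)) := by
    have h := hUmin.comp hεsm
    have heq : (fun ω => U (εs ω)) = (fun x : ℝ≥0∞ => U (min x α⁻¹)) ∘ εs := by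
      funext ω
      show U (εs ω) = U (min (εs ω) α⁻¹)
      rw [min_eq_left (hεsb ω)]
    rw [heq]
    exact h
  set S : ℝ≥0∞ := ∫⁻ ω, U (εs ω) ∂Q with hSdef
  have hS_le : S ≤ U α⁻¹ := by
    calc S ≤ ∫⁻ _, U α⁻¹ ∂Q :=
          lintegral_mono fun ω =>
            hU.monotoneOn ⟨zero_le, hεsb ω⟩ ⟨zero_le, le_rfl⟩ (hεsb ω)
      _ = U α⁻¹ := by simp
  have hS : S ≠ ∞ := fun h => hUtop (top_le_iff.mp (h ▸ hS_le))
  -- the set where εs vanishes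
  set A : Set Ω := {ω | εs ω = 0} with hAdef
  have hA : MeasurableSet A := hεsm (measurableSet_singleton 0)
  -- reduce the goal to Q A = 0
  suffices hQA : Q A = 0 by
    rw [ae_iff]
    convert hQA using 2
    ext ω
    simp [A, pos_iff_ne_zero]
  set c : ℝ≥0∞ := min 1 α⁻¹ with hcdef
  have hc0 : c ≠ 0 := (lt_min one_pos hαinv_pos).ne'
  have hc1 : c ≤ 1 := min_le_left _ _
  have hcα : c ≤ α⁻¹ := min_le_right _ _
  have hctop : c ≠ ∞ := (lt_of_le_of_lt hc1 (by simp)).ne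
  -- key inequality: for every K > 0, K * Q A ≤ S / c
  have key : ∀ K : ℝ, 0 < K → ENNReal.ofReal K * Q A ≤ S / c := by
    intro K hK
    obtain ⟨v, hv0, hvtop, hvc, hvα, hUv⟩ :=
      exists_small_utility_gain α hα0 hαtop U D hU hD0 c hc0 K hK
    set t : ℝ≥0∞ := v / c with htdef
    have ht0 : t ≠ 0 := by
      simp only [htdef, ne_eq, ENNReal.div_eq_zero_iff, not_or]
      exact ⟨hv0, hctop⟩
    have htc : t * c = v := ENNReal.div_mul_cancel hc0 hctop
    have ht1 : t < 1 := by
      rw [htdef, ENNReal.div_lt_iff (Or.inl hc0) (Or.inl hctop), one_mul]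
      exact hvc
    have ht_le1 : t ≤ 1 := ht1.le
    -- the perturbed test
    set ε : Ω → ℝ≥0∞ := fun ω => if εs ω = 0 then v else (1 - t) * εs ω with hεdef
    have hεm : Measurable ε :=
      Measurable.ite (hεsm (measurableSet_singleton 0)) measurable_const
        (hεsm.const_mul _)
    have hεb : ∀ ω, ε ω ≤ α⁻¹ := by
      intro ω
      by_cases h : εs ω = 0
      · simp only [hεdef, h, if_pos]
        exact le_trans hvc.le hcα
      · simp only [hεdef, h, if_neg, not_false_iff]
        calc (1 - t) * εs ω ≤ 1 * εs ω := mul_le_mul_left tsub_le_self _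
          _ = εs ω := one_mul _
          _ ≤ α⁻¹ := hεsb ω
    have hεval : ∀ P ∈ H, ∫⁻ ω, ε ω ∂P ≤ 1 := by
      intro P hP
      haveI := hH P hP
      have hpt : ∀ ω, ε ω ≤ (1 - t) * εs ω + t * c := by
        intro ω
        by_cases h : εs ω = 0
        · simp only [hεdef, h, if_pos, mul_zero, zero_add, htc, le_refl]
        · simp only [hεdef, h, if_neg, not_false_iff]
          exact le_self_add
      calc ∫⁻ ω, ε ω ∂P ≤ ∫⁻ ω, ((1 - t) * εs ω + t * c) ∂P := lintegral_mono hpt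
        _ = (1 - t) * ∫⁻ ω, εs ω ∂P + t * c := by
            rw [lintegral_add_right _ measurable_const, lintegral_const_mul _ hεsm,
              lintegral_const, measure_univ, mul_one]
        _ ≤ (1 - t) * 1 + t * 1 := by
            gcongr
            exact hεsval P hP
        _ = (1 - t) + t := by rw [mul_one, mul_one]
        _ = 1 := tsub_add_cancel_of_le ht_le1
    -- pointwise lower bound on the utility of ε
    have hpt : ∀ ω, A.indicator (fun _ => U v) ω + (1 - t) * U (εs ω) ≤ U (ε ω) := by
      intro ω
      by_cases h : εs ω = 0
      · have hmem : ω ∈ A := h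
        simp only [hεdef, h, if_pos, Set.indicator_of_mem hmem, hU.map_zero, mul_zero,
          add_zero, le_refl]
      · have hmem : ω ∉ A := h
        simp only [hεdef, h, if_neg, not_false_iff, Set.indicator_of_notMem hmem, zero_add]
        have hcc := hU.concaveOn (εs ω) ⟨zero_le, hεsb ω⟩ 0 ⟨le_rfl, zero_le⟩
          (1 - t) tsub_le_self
        rw [hU.map_zero] at hcc
        simp only [mul_zero, add_zero] at hcc
        exact hcc
    -- integrate
    have hint : U v * Q A + (1 - t) * S ≤ S := by
      have h1 : ∫⁻ ω, (A.indicator (fun _ => U v) ω + (1 - t) * U (εs ω)) ∂Q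
          = U v * Q A + (1 - t) * S := by
        rw [lintegral_add_left ((measurable_const.indicator hA)),
          lintegral_indicator hA, setLIntegral_const, lintegral_const_mul _ hUεs]
      calc U v * Q A + (1 - t) * S
          = ∫⁻ ω, (A.indicator (fun _ => U v) ω + (1 - t) * U (εs ω)) ∂Q := h1.symm
        _ ≤ ∫⁻ ω, U (ε ω) ∂Q := lintegral_mono hpt
        _ ≤ S := hopt ε hεm hεb hεval
    have hsub : U v * Q A ≤ t * S := by
      have h2 : U v * Q A ≤ S - (1 - t) * S :=
        ENNReal.le_sub_of_add_le_right
          (ENNReal.mul_ne_top ((tsub_le_self.trans_lt ENNReal.one_lt_top).ne) hS) hint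
      have h3 : S - (1 - t) * S = t * S := by
        have h4 : ((1 : ℝ≥0∞) - (1 - t)) * S = 1 * S - (1 - t) * S :=
          ENNReal.sub_mul (fun _ _ => hS)
        rw [ENNReal.sub_sub_cancel ENNReal.one_ne_top ht_le1, one_mul] at h4
        rw [← h4]
      rwa [h3] at h2
    -- cancel v
    have h5 : v * (ENNReal.ofReal K * Q A) ≤ v * (S / c) := by
      calc v * (ENNReal.ofReal K * Q A) = (ENNReal.ofReal K * v) * Q A := by ring
        _ ≤ U v * Q A := mul_le_mul_left hUv _
        _ ≤ t * S := hsub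
        _ = v * (S / c) := by
            rw [htdef, ENNReal.div_eq_inv_mul, ENNReal.div_eq_inv_mul]; ring
    exact (ENNReal.mul_le_mul_iff_right hv0 hvtop).mp h5
  -- conclude Q A = 0
  by_contra hQA
  have hQAfin : Q A ≠ ∞ := (measure_lt_top Q A).ne
  have hB : S / c ≠ ∞ := (ENNReal.div_lt_top hS hc0).ne
  obtain ⟨n, hn⟩ := ENNReal.exists_nat_gt (r := S / c / Q A)
    (ENNReal.div_lt_top hB hQA).ne
  have hn0 : n ≠ 0 := by
    rintro rfl
    simp at hn
  have hlt : S / c < (n : ℝ≥0∞) * Q A :=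
    (ENNReal.div_lt_iff (Or.inl hQA) (Or.inl hQAfin)).mp hn
  have hle : (n : ℝ≥0∞) * Q A ≤ S / c := by
    have := key (n : ℝ) (by exact_mod_cast Nat.pos_of_ne_zero hn0)
    rwa [ENNReal.ofReal_natCast] at this
  exact absurd (lt_of_lt_of_le hlt hle) (lt_irrefl _)
end

section
/- Let α ≥ 0, let H be a set of probability measures and Q a probability measure on Ω, let U be a utility function, and let E_α be the set of valid level-α continuous tests for H. Suppose ε* ∈ E_α is Q-almost surely strictly positive, 0 < E_Q[U'(ε*)·ε*] < ∞, and ε* satisfies the first-order condition E_Q[U'(ε*)·(ε − ε*)] ≤ 0 for every ε ∈ E_α. Define the measure P* on Ω by dP*/dQ = U'(ε*)/E_Q[U'(ε*)·ε*]. Then E_{P*}[ε] ≤ 1 for every ε ∈ E_α; that is, P* belongs to the level-α effective null hypothesis H_α^eff = {unsigned measures P with E_P[ε] ≤ 1 for all ε ∈ E_α}. -/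
open MeasureTheory ENNReal NNReal Set

/-- The measure `P*` with `dP*/dQ = U'(ε*) / E_Q[U'(ε*)·ε*]` belongs to the
level-`α` effective null hypothesis: if `ε*` is a `Q`-a.s. positive valid
level-`α` continuous test for `H` with `0 < E_Q[U'(ε*)·ε*] < ∞` satisfying the
first-order condition `E_Q[U'(ε*)·(ε − ε*)] ≤ 0` for every valid level-`α`
continuous test `ε`, then `E_{P*}[ε] ≤ 1` for every valid level-`α` continuous
test `ε`. -/
theorem ripr_mem_effective_null
    {Ω : Type*} [MeasurableSpace Ω]
    (H : Set (Measure Ω)) (hH : ∀ P ∈ H, IsProbabilityMeasure P)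
    (Q : Measure Ω) [IsProbabilityMeasure Q]
    (α : ℝ≥0∞)
    (U D : ℝ≥0∞ → ℝ≥0∞) (hU : IsUtility α U D)
    (εs : Ω → ℝ≥0∞) (hεsm : Measurable εs) (hεsb : ∀ ω, εs ω ≤ α⁻¹)
    (hεsval : ∀ P ∈ H, ∫⁻ ω, εs ω ∂P ≤ 1)
    (hpos : ∀ᵐ ω ∂Q, 0 < εs ω)
    (hc_pos : 0 < ∫⁻ ω, D (εs ω) * εs ω ∂Q)
    (hc_fin : ∫⁻ ω, D (εs ω) * εs ω ∂Q ≠ ∞)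
    (hfoc : ∀ ε : Ω → ℝ≥0∞, Measurable ε → (∀ ω, ε ω ≤ α⁻¹) →
      (∀ P ∈ H, ∫⁻ ω, ε ω ∂P ≤ 1) →
      ∫⁻ ω, D (εs ω) * ε ω ∂Q ≤ ∫⁻ ω, D (εs ω) * εs ω ∂Q) :
    ∀ ε : Ω → ℝ≥0∞, Measurable ε → (∀ ω, ε ω ≤ α⁻¹) →
      (∀ P ∈ H, ∫⁻ ω, ε ω ∂P ≤ 1) →
      ∫⁻ ω, ε ω
        ∂(Q.withDensity fun ω => D (εs ω) / ∫⁻ ω', D (εs ω') * εs ω' ∂Q) ≤ 1 := by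
  intro ε hεm hεb hεval
  set c := ∫⁻ ω', D (εs ω') * εs ω' ∂Q with hc
  have hDmeas : Measurable fun ω => D (εs ω) := by
    have hanti : Antitone fun x : ℝ≥0∞ => D (min x α⁻¹) := by
      intro x y hxy
      exact hU.deriv_antitoneOn ⟨zero_le, min_le_right _ _⟩
        ⟨zero_le, min_le_right _ _⟩ (min_le_min hxy le_rfl)
    have heq' : (fun ω => D (εs ω)) = (fun x => D (min x α⁻¹)) ∘ εs := by
      funext ω; simp [min_eq_left (hεsb ω)]
    rw [heq']; exact hanti.measurable.comp hεsm
  have hdens : Measurable fun ω => D (εs ω) / c := (hDmeas.div measurable_const)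
  rw [lintegral_withDensity_eq_lintegral_mul _ hdens hεm]
  have heq : ∀ ω, ((fun ω => D (εs ω) / c) * ε) ω = c⁻¹ * (D (εs ω) * ε ω) := by
    intro ω
    simp [Pi.mul_apply, ENNReal.div_eq_inv_mul]
    ring
  calc ∫⁻ ω, ((fun ω => D (εs ω) / c) * ε) ω ∂Q
      = ∫⁻ ω, c⁻¹ * (D (εs ω) * ε ω) ∂Q := by simp_rw [heq]
    _ = c⁻¹ * ∫⁻ ω, D (εs ω) * ε ω ∂Q :=
        lintegral_const_mul _ (hDmeas.mul hεm)
    _ ≤ c⁻¹ * c := mul_le_mul_right (hfoc ε hεm hεb hεval) _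
    _ = 1 := ENNReal.inv_mul_cancel hc_pos.ne' hc_fin
end
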